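/- Regular hunting of predators destabilizes the Lotka–Volterra system: for b_x = 0 and any b_y < 0, the point (X*, Y*) = (1 − b_y, 1) is a stationary point of the open Lotka–Volterra system with X* > 0, Y* > 0, and the Jacobian matrix J = [[1 − Y*, −X*], [Y*, X* − 1]] has an eigenvalue with positive real part. -/

import Mathlib

/-- A quadratic `μ² + b μ + (1 - b)` with `b < 0` has a complex root with
positive real part. -/
lemma quad_root_pos_re (b : ℝ) (hb : b < 0) :
    ∃ μ : ℂ, μ ^ 2 + (b : ℂ) * μ + (1 - (b : ℂ)) = 0 ∧ 0 < μ.re := by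
  set D : ℝ := b ^ 2 - 4 * (1 - b) with hD
  rcases le_or_gt 0 D with hD0 | hD0
  · refine ⟨(((-b + Real.sqrt D) / 2 : ℝ) : ℂ), ?_, ?_⟩
    · have hs : Real.sqrt D ^ 2 = D := Real.sq_sqrt hD0
      have : ((-b + Real.sqrt D) / 2) ^ 2 + b * ((-b + Real.sqrt D) / 2)
          + (1 - b) = 0 := by nlinarith [hs]
      push_cast
      have h2 := congrArg Complex.ofReal this
      simp only [Complex.ofReal_add, Complex.ofReal_neg, Complex.ofReal_sub, Complex.ofReal_one, Complex.ofReal_mul, Complex.ofReal_div, Complex.ofReal_pow, Complex.ofReal_ofNat, Complex.ofReal_zero] at h2 ⊢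
      linear_combination h2
    · simp only [Complex.ofReal_re]
      have := Real.sqrt_nonneg D
      linarith
  · refine ⟨Complex.mk (-b / 2) (Real.sqrt (-D) / 2), ?_, ?_⟩
    · have hs : Real.sqrt (-D) ^ 2 = -D := Real.sq_sqrt (by linarith)
      apply Complex.ext <;>
        simp [Complex.ext_iff, pow_two, Complex.mul_re, Complex.mul_im,
          Complex.add_re, Complex.add_im, Complex.sub_re, Complex.sub_im,
          Complex.ofReal_re, Complex.ofReal_im] <;>
        nlinarith [hs]
    · simp only []
      show 0 < -b / 2
      linarith

theorem lv_hunting_predators_destabilizes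
    (bx by_ : ℝ) (hbx : bx = 0) (hby : by_ < 0) :
    let Xs : ℝ := 1 - by_
    let Ys : ℝ := 1
    (0 < Xs ∧ 0 < Ys ∧ Xs - Xs * Ys + bx = 0 ∧ Xs * Ys - Ys + by_ = 0) ∧
    ∃ μ ∈ spectrum ℂ ((!![1 - Ys, -Xs; Ys, Xs - 1]).map Complex.ofReal),
      0 < μ.re := by
  intro Xs Ys
  subst hbx
  refine ⟨⟨by simp [Xs]; linarith, by norm_num [Ys], by ring, by ring⟩, ?_⟩
  obtain ⟨μ, hμ, hre⟩ := quad_root_pos_re by_ hby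
  refine ⟨μ, ?_, hre⟩
  rw [spectrum.mem_iff]
  intro hU
  rw [Matrix.isUnit_iff_isUnit_det] at hU
  have hdet : ((algebraMap ℂ (Matrix (Fin 2) (Fin 2) ℂ)) μ
      - (!![1 - Ys, -Xs; Ys, Xs - 1]).map Complex.ofReal).det = 0 := by
    have : ((algebraMap ℂ (Matrix (Fin 2) (Fin 2) ℂ)) μ
        - (!![1 - Ys, -Xs; Ys, Xs - 1]).map Complex.ofReal).det
        = μ ^ 2 + (by_ : ℂ) * μ + (1 - (by_ : ℂ)) := by
      simp [Matrix.det_fin_two, Matrix.algebraMap_matrix_apply, Xs, Ys]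
      ring
    rw [this, hμ]
  rw [hdet] at hU
  exact not_isUnit_zero hU
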